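/- Let d ≥ 1, β > 0 and let U ∈ C²(ℝ) satisfy (A0) and be uniformly strictly convex with C₁ ≤ U'' ≤ C₂ for constants 0 < C₁ ≤ C₂. Then for every a ∈ ℝ^{2d} and all indices i ≠ j in {1,…,2d}: C₁²/(4dβC₂) ≤ Cov_{ν_a}( U'(a_i − ·), U'(a_j − ·) ) ≤ C₂²/(4dβC₁). In particular, the one-step coarse graining preserves strict convexity in the convex case. -/

import Mathlib

open MeasureTheory Real Filter Topology Set
open scoped ENNReal NNReal

noncomputable section

/-- Boltzmann weight of the single odd site given the `2d` neighbouring values `a`. -/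
def siteWeight (β : ℝ) (d : ℕ) (U : ℝ → ℝ) (a : Fin (2*d) → ℝ) (t : ℝ) : ℝ :=
  Real.exp (-(2*β) * ∑ k, U (a k - t))

/-- Normalising constant `Z_a`. -/
def Zsite (β : ℝ) (d : ℕ) (U : ℝ → ℝ) (a : Fin (2*d) → ℝ) : ℝ :=
  ∫ t : ℝ, siteWeight β d U a t

/-- Single-site measure `ν_a`. -/
def nuSite (β : ℝ) (d : ℕ) (U : ℝ → ℝ) (a : Fin (2*d) → ℝ) : Measure ℝ :=
  volume.withDensity fun t => ENNReal.ofReal (siteWeight β d U a t / Zsite β d U a)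

/-- Coarse-grained potential `F(a) = -log Z_a`. -/
def Fcg (β : ℝ) (d : ℕ) (U : ℝ → ℝ) (a : Fin (2*d) → ℝ) : ℝ :=
  - Real.log (Zsite β d U a)

/-- Covariance of two functions under a measure on `ℝ`. -/
def covM (ν : Measure ℝ) (f g : ℝ → ℝ) : ℝ :=
  (∫ t, f t * g t ∂ν) - (∫ t, f t ∂ν) * (∫ t, g t ∂ν)

/-- Variance of the identity function under a measure on `ℝ`. -/
def varId (ν : Measure ℝ) : ℝ := covM ν (fun t => t) (fun t => t)

/-- First partial derivative. -/
def pd {n : ℕ} (Φ : (Fin n → ℝ) → ℝ) (i : Fin n) (a : Fin n → ℝ) : ℝ :=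
  fderiv ℝ Φ a (Pi.single i 1)

/-- Second partial derivative. -/
def pd2 {n : ℕ} (Φ : (Fin n → ℝ) → ℝ) (i j : Fin n) (a : Fin n → ℝ) : ℝ :=
  fderiv ℝ (fun x => fderiv ℝ Φ x (Pi.single i 1)) a (Pi.single j 1)

lemma derivU_sandwich {U : ℝ → ℝ} {C₁ C₂ : ℝ} (hU : ContDiff ℝ 2 U)
    (hU'' : ∀ s, C₁ ≤ deriv (deriv U) s ∧ deriv (deriv U) s ≤ C₂) :
    ∀ x y : ℝ, x ≤ y → C₁ * (y - x) ≤ deriv U y - deriv U x ∧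
      deriv U y - deriv U x ≤ C₂ * (y - x) := by
  have h2 : ContDiff ℝ (1+1 : ℕ) U := by norm_num at hU ⊢; exact hU
  have h1 : ContDiff ℝ 1 (deriv U) := (contDiff_succ_iff_deriv.mp h2).2.2
  have hdiff : Differentiable ℝ (deriv U) := h1.differentiable one_ne_zero
  intro x y hxy
  constructor
  · have hmono : Monotone (fun t => deriv U t - C₁ * t) := by
      apply monotone_of_deriv_nonneg
      · exact hdiff.sub ((differentiable_id.const_mul C₁))
      · intro t
        have hh : HasDerivAt (fun t => deriv U t - C₁ * t) (deriv (deriv U) t - C₁ * 1) t :=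
          (hdiff t).hasDerivAt.sub (by simpa using (hasDerivAt_id t).const_mul C₁)
        rw [hh.deriv]
        linarith [(hU'' t).1]
    have := hmono hxy
    simp only at this
    linarith
  · have hmono : Monotone (fun t => C₂ * t - deriv U t) := by
      apply monotone_of_deriv_nonneg
      · exact (differentiable_id.const_mul C₂).sub hdiff
      · intro t
        have hh : HasDerivAt (fun t => C₂ * t - deriv U t) (C₂ * 1 - deriv (deriv U) t) t :=
          HasDerivAt.sub (by simpa using (hasDerivAt_id t).const_mul C₂) (hdiff t).hasDerivAt
        rw [hh.deriv]
        linarith [(hU'' t).2]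
    have := hmono hxy
    simp only at this
    linarith

lemma gauss_decay {ε K : ℝ} (hε : 0 < ε) :
    Tendsto (fun t : ℝ => (1 + |t|) * Real.exp (K - ε * t^2)) atTop (𝓝 0) := by
  have he : Tendsto (fun t : ℝ => Real.exp (K - ε * t ^ 2)) atTop (𝓝 0) := by
    apply Real.tendsto_exp_atBot.comp
    have hsq : Tendsto (fun t : ℝ => ε * t ^ 2) atTop atTop :=
      (tendsto_pow_atTop two_ne_zero).const_mul_atTop hε
    have := tendsto_atBot_add_const_left atTop K (tendsto_neg_atTop_atBot.comp hsq)
    simpa [Function.comp_def, sub_eq_add_neg] using this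
  have h2 : Tendsto (fun t : ℝ => |t| * Real.exp (K - ε * t ^ 2)) atTop (𝓝 0) := by
    have h3 : Tendsto (fun t : ℝ => t * Real.exp (-ε * t ^ 2)) atTop (𝓝 0) := by
      have hlim : Tendsto (fun x : ℝ => Real.exp (-(1/2) * x)) atTop (𝓝 0) := by
        apply Real.tendsto_exp_atBot.comp
        have : Tendsto (fun x : ℝ => (1/2 : ℝ) * x) atTop atTop :=
          tendsto_id.const_mul_atTop (by norm_num)
        exact (tendsto_neg_atTop_atBot.comp this).congr (fun x => by
          simp [Function.comp_def])
      have := (rpow_mul_exp_neg_mul_sq_isLittleO_exp_neg hε 1).trans_tendsto hlim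
      refine this.congr' ?_
      filter_upwards [eventually_ge_atTop (0:ℝ)] with t ht
      rw [Real.rpow_one]
    have h4 : Tendsto (fun t : ℝ => Real.exp K * (t * Real.exp (-ε * t ^ 2))) atTop (𝓝 0) := by
      simpa using h3.const_mul (Real.exp K)
    refine h4.congr' ?_
    filter_upwards [eventually_ge_atTop (0:ℝ)] with t ht
    rw [abs_of_nonneg ht, show K - ε*t^2 = K + -ε*t^2 by ring, Real.exp_add]
    ring
  have := he.add h2
  simpa [add_mul, one_mul] using this

lemma gauss_vanish {φ : ℝ → ℝ} {c ε K : ℝ} (hε : 0 < ε)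
    (h : ∀ t, |φ t| ≤ c * ((1 + |t|) * Real.exp (K - ε * t^2))) :
    Tendsto φ atTop (𝓝 0) ∧ Tendsto φ atBot (𝓝 0) := by
  have hb : Tendsto (fun t : ℝ => c * ((1 + |t|) * Real.exp (K - ε * t^2))) atTop (𝓝 0) := by
    simpa using (gauss_decay (K := K) hε).const_mul c
  constructor
  · exact squeeze_zero_norm h hb
  · have hneg : Tendsto (fun t : ℝ => φ (-t)) atTop (𝓝 0) := by
      exact squeeze_zero_norm (fun t => by simpa [abs_neg, neg_sq] using h (-t)) hb
    have := hneg.comp (tendsto_neg_atBot_atTop : Tendsto (fun x : ℝ => -x) atBot atTop)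
    simpa [Function.comp_def] using this

lemma integral_deriv_zero {G G' : ℝ → ℝ} (hd : ∀ t, HasDerivAt G (G' t) t)
    (hi : Integrable G') (htop : Tendsto G atTop (𝓝 0)) (hbot : Tendsto G atBot (𝓝 0)) :
    ∫ t, G' t = 0 := by
  have h1 : ∫ x in Ioi (0:ℝ), G' x = 0 - G 0 :=
    integral_Ioi_of_hasDerivAt_of_tendsto (hd 0).continuousAt.continuousWithinAt
      (fun x _ => hd x) hi.integrableOn htop
  have h2 : ∫ x in Iic (0:ℝ), G' x = G 0 - 0 :=
    integral_Iic_of_hasDerivAt_of_tendsto (hd 0).continuousAt.continuousWithinAt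
      (fun x _ => hd x) hi.integrableOn hbot
  have h3 := intervalIntegral.integral_Iic_add_Ioi (b := (0:ℝ)) hi.integrableOn hi.integrableOn
  rw [h1, h2] at h3
  rw [← h3]; ring

lemma covkernel_inner (w f g : ℝ → ℝ)
    (Iw : Integrable w) (If : Integrable fun t => f t * w t)
    (Ig : Integrable fun t => g t * w t) (Ifg : Integrable fun t => f t * g t * w t) (s : ℝ) :
    ∫ t, (f s - f t) * (g s - g t) * (w s * w t)
      = (f s * g s * w s) * (∫ t, w t) - (f s * w s) * (∫ t, g t * w t)
        - (g s * w s) * (∫ t, f t * w t) + w s * (∫ t, f t * g t * w t) := by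
  have h1 : (fun t => (f s - f t) * (g s - g t) * (w s * w t))
      = fun t => ((f s * g s * w s) * w t - (f s * w s) * (g t * w t))
        - (g s * w s) * (f t * w t) + w s * (f t * g t * w t) := by
    funext t; ring
  have J1 : Integrable (fun t => (f s * g s * w s) * w t) volume := Iw.const_mul _
  have J2 : Integrable (fun t => (f s * w s) * (g t * w t)) volume := Ig.const_mul _
  have J3 : Integrable (fun t => (g s * w s) * (f t * w t)) volume := If.const_mul _
  have J4 : Integrable (fun t => w s * (f t * g t * w t)) volume := Ifg.const_mul _
  have J12 : Integrable (fun t => (f s * g s * w s) * w t - (f s * w s) * (g t * w t)) volume :=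
    J1.sub J2
  have J123 : Integrable (fun t => ((f s * g s * w s) * w t - (f s * w s) * (g t * w t))
      - (g s * w s) * (f t * w t)) volume := J12.sub J3
  rw [h1, integral_add J123 J4, integral_sub J12 J3, integral_sub J1 J2,
    integral_const_mul, integral_const_mul, integral_const_mul, integral_const_mul]

lemma covkernel_double (w f g : ℝ → ℝ)
    (Iw : Integrable w) (If : Integrable fun t => f t * w t)
    (Ig : Integrable fun t => g t * w t) (Ifg : Integrable fun t => f t * g t * w t) :
    ∫ s, ∫ t, (f s - f t) * (g s - g t) * (w s * w t)
      = 2 * ((∫ t, w t) * (∫ t, f t * g t * w t) - (∫ t, f t * w t) * (∫ t, g t * w t)) := by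
  have h1 : (fun s => ∫ t, (f s - f t) * (g s - g t) * (w s * w t))
      = fun s => (((f s * g s * w s) * (∫ t, w t) - (f s * w s) * (∫ t, g t * w t))
        - (g s * w s) * (∫ t, f t * w t)) + w s * (∫ t, f t * g t * w t) := by
    funext s; rw [covkernel_inner w f g Iw If Ig Ifg s]
  have J1 : Integrable (fun s => (f s * g s * w s) * (∫ t, w t)) volume := Ifg.mul_const _
  have J2 : Integrable (fun s => (f s * w s) * (∫ t, g t * w t)) volume := If.mul_const _
  have J3 : Integrable (fun s => (g s * w s) * (∫ t, f t * w t)) volume := Ig.mul_const _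
  have J4 : Integrable (fun s => w s * (∫ t, f t * g t * w t)) volume := Iw.mul_const _
  have J12 : Integrable (fun s => (f s * g s * w s) * (∫ t, w t)
      - (f s * w s) * (∫ t, g t * w t)) volume := J1.sub J2
  have J123 : Integrable (fun s => ((f s * g s * w s) * (∫ t, w t)
      - (f s * w s) * (∫ t, g t * w t)) - (g s * w s) * (∫ t, f t * w t)) volume := J12.sub J3
  rw [h1, integral_add J123 J4, integral_sub J12 J3, integral_sub J1 J2,
    integral_mul_const, integral_mul_const, integral_mul_const, integral_mul_const]
  ring

lemma covkernel_mono (w f g p q : ℝ → ℝ) (hw0 : ∀ t, 0 ≤ w t)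
    (Iw : Integrable w) (If : Integrable fun t => f t * w t)
    (Ig : Integrable fun t => g t * w t) (Ifg : Integrable fun t => f t * g t * w t)
    (Ip : Integrable fun t => p t * w t) (Iq : Integrable fun t => q t * w t)
    (Ipq : Integrable fun t => p t * q t * w t)
    (hpt : ∀ s t, (p s - p t) * (q s - q t) ≤ (f s - f t) * (g s - g t)) :
    2 * ((∫ t, w t) * (∫ t, p t * q t * w t) - (∫ t, p t * w t) * (∫ t, q t * w t))
      ≤ 2 * ((∫ t, w t) * (∫ t, f t * g t * w t) - (∫ t, f t * w t) * (∫ t, g t * w t)) := by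
  rw [← covkernel_double w f g Iw If Ig Ifg, ← covkernel_double w p q Iw Ip Iq Ipq]
  have inner_int : ∀ (u v : ℝ → ℝ), Integrable (fun t => u t * w t) volume →
      Integrable (fun t => v t * w t) volume →
      Integrable (fun t => u t * v t * w t) volume → ∀ s : ℝ,
      Integrable (fun t => (u s - u t) * (v s - v t) * (w s * w t)) volume := by
    intro u v Iu Iv Iuv s
    have : (fun t => (u s - u t) * (v s - v t) * (w s * w t))
        = fun t => (((u s * v s * w s) * w t - (u s * w s) * (v t * w t))
          - (v s * w s) * (u t * w t)) + w s * (u t * v t * w t) := by funext t; ring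
    rw [this]
    exact (((Iw.const_mul _).sub (Iv.const_mul _)).sub (Iu.const_mul _)).add (Iuv.const_mul _)
  have outer_int : ∀ (u v : ℝ → ℝ), Integrable (fun t => u t * w t) volume →
      Integrable (fun t => v t * w t) volume →
      Integrable (fun t => u t * v t * w t) volume →
      Integrable (fun s => ∫ t, (u s - u t) * (v s - v t) * (w s * w t)) volume := by
    intro u v Iu Iv Iuv
    have : (fun s => ∫ t, (u s - u t) * (v s - v t) * (w s * w t))
        = fun s => (((u s * v s * w s) * (∫ t, w t) - (u s * w s) * (∫ t, v t * w t))
          - (v s * w s) * (∫ t, u t * w t)) + w s * (∫ t, u t * v t * w t) := by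
      funext s; rw [covkernel_inner w u v Iw Iu Iv Iuv s]
    rw [this]
    exact (((Iuv.mul_const _).sub (Iu.mul_const _)).sub (Iv.mul_const _)).add (Iw.mul_const _)
  apply integral_mono (outer_int p q Ip Iq Ipq) (outer_int f g If Ig Ifg)
  intro s
  apply integral_mono (inner_int p q Ip Iq Ipq s) (inner_int f g If Ig Ifg s)
  intro t
  exact mul_le_mul_of_nonneg_right (hpt s t) (mul_nonneg (hw0 s) (hw0 t))


set_option maxHeartbeats 1600000 in
/-- **Statement 18** (Remark 4.11: one-step coarse graining preserves strict
convexity for uniformly strictly convex `U`). -/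
theorem statement18
    {d : ℕ} {β A B C₁ C₂ : ℝ} {U : ℝ → ℝ}
    (hd : 1 ≤ d) (hβ : 0 < β)
    -- (A0)
    (hA : 0 < A) (hA0 : ∀ η : ℝ, A * η ^ 2 - B ≤ U η)
    -- uniform strict convexity
    (hU : ContDiff ℝ 2 U)
    (hC₁ : 0 < C₁) (hC₁₂ : C₁ ≤ C₂)
    (hU'' : ∀ s, C₁ ≤ deriv (deriv U) s ∧ deriv (deriv U) s ≤ C₂) :
    ∀ (a : Fin (2*d) → ℝ) (i j : Fin (2*d)), i ≠ j →
      C₁^2/(4*d*β*C₂) ≤ covM (nuSite β d U a)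
          (fun t => deriv U (a i - t)) (fun t => deriv U (a j - t)) ∧
      covM (nuSite β d U a)
          (fun t => deriv U (a i - t)) (fun t => deriv U (a j - t))
        ≤ C₂^2/(4*d*β*C₁) := by
  intro a i j _hij
  have hC₂ : 0 < C₂ := lt_of_lt_of_le hC₁ hC₁₂
  have hd' : (1:ℝ) ≤ (d:ℝ) := by exact_mod_cast hd
  have hsand := derivU_sandwich hU hU''
  have h2 : ContDiff ℝ (1+1 : ℕ) U := by norm_num at hU ⊢; exact hU
  have h1 : ContDiff ℝ 1 (deriv U) := (contDiff_succ_iff_deriv.mp h2).2.2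
  have hUdiff : Differentiable ℝ U := h2.differentiable (by norm_num)
  have hU'cont : Continuous (deriv U) := h1.continuous
  set w : ℝ → ℝ := siteWeight β d U a with hwdef
  set Z : ℝ := Zsite β d U a with hZdef
  set f : ℝ → ℝ := fun t => deriv U (a i - t) with hfdef
  set g : ℝ → ℝ := fun t => deriv U (a j - t) with hgdef
  set Wd : ℝ → ℝ := fun t => -(2*β) * ∑ k, deriv U (a k - t) with hWdef
  set ε : ℝ := 2*β*A with hεdef
  set K : ℝ := 2*β*(A * ∑ k, (a k)^2 + (2*d)*B) with hKdef
  have hε : 0 < ε := by positivity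
  have hw0 : ∀ t, 0 ≤ w t := fun t => (Real.exp_pos _).le
  have hwc : Continuous w := by
    apply Real.continuous_exp.comp
    exact continuous_const.mul (continuous_finset_sum _ fun k _ =>
      hU.continuous.comp (continuous_const.sub continuous_id))
  have h2β : (0:ℝ) ≤ 2*β := by positivity
  -- Gaussian domination of the weight
  have hgw : ∀ t, w t ≤ Real.exp (K - ε * t^2) := by
    intro t
    rw [show w t = Real.exp (-(2*β) * ∑ k, U (a k - t)) from rfl]
    apply Real.exp_le_exp.2
    have h3 : ∀ k : Fin (2*d), A * (t^2/2) - (A * (a k)^2 + B) ≤ U (a k - t) := by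
      intro k
      have h4 : t^2/2 - (a k)^2 ≤ (a k - t)^2 := by nlinarith [sq_nonneg (2*(a k) - t)]
      have h5 := hA0 (a k - t)
      nlinarith [mul_le_mul_of_nonneg_left h4 hA.le]
    have h5 : ∑ k, (A * (t^2/2) - (A * (a k)^2 + B)) ≤ ∑ k, U (a k - t) :=
      Finset.sum_le_sum fun k _ => h3 k
    have h6 : ∑ k : Fin (2*d), (A * (t^2/2) - (A * (a k)^2 + B))
        = (2*(d:ℝ)) * (A * (t^2/2)) - (A * (∑ k, (a k)^2) + (2*(d:ℝ))*B) := by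
      rw [Finset.sum_sub_distrib, Finset.sum_const, Finset.card_univ, Fintype.card_fin,
        nsmul_eq_mul, Finset.sum_add_distrib, Finset.sum_const, Finset.card_univ,
        Fintype.card_fin, nsmul_eq_mul, ← Finset.mul_sum]
      push_cast
      ring
    have h7 : (2*(d:ℝ)) * (A * (t^2/2)) - (A * (∑ k, (a k)^2) + (2*(d:ℝ))*B)
        ≤ ∑ k, U (a k - t) := h6 ▸ h5
    have h8 : ε*t^2 ≤ 2*β*A*(d:ℝ)*t^2 := by
      rw [hεdef]
      nlinarith [mul_nonneg (mul_nonneg h2β hA.le) (sq_nonneg t)]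
    nlinarith [mul_le_mul_of_nonneg_left h7 h2β]
  -- master integrability
  have mast : ∀ p : ℝ → ℝ, Continuous p → ∀ M : ℝ, (∀ t, |p t| ≤ M * (1 + |t|)^2) →
      Integrable (fun t => p t * w t) := by
    intro p hp M hM
    have hM0 : 0 ≤ M := by have := hM 0; simp at this; linarith [abs_nonneg (p 0)]
    have hint1 : Integrable (fun t : ℝ => Real.exp (K - ε * t^2)) := by
      have : (fun t : ℝ => Real.exp (K - ε * t^2))
          = fun t : ℝ => Real.exp K * Real.exp (-ε * t^2) := by
        funext t; rw [← Real.exp_add]; congr 1; ring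
      rw [this]
      exact (integrable_exp_neg_mul_sq hε).const_mul _
    have hint2 : Integrable (fun t : ℝ => t^2 * Real.exp (K - ε * t^2)) := by
      have : (fun t : ℝ => t^2 * Real.exp (K - ε * t^2))
          = fun t : ℝ => Real.exp K * (t^(2:ℕ) * Real.exp (-ε * t^2)) := by
        funext t
        rw [show K - ε * t^2 = -ε*t^2 + K by ring, Real.exp_add]
        push_cast; ring
      rw [this]
      apply Integrable.const_mul
      have h9 := integrable_rpow_mul_exp_neg_mul_sq hε (s := 2) (by norm_num)
      have h10 : (fun x : ℝ => x ^ (2:ℝ) * Real.exp (-ε * x^2))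
          = fun x : ℝ => x ^ (2:ℕ) * Real.exp (-ε * x^2) := by
        funext x
        rw [show ((2:ℝ) = ((2:ℕ):ℝ)) by norm_num, Real.rpow_natCast]
      rwa [h10] at h9
    apply Integrable.mono'
      ((hint1.const_mul (2*M)).add (hint2.const_mul (2*M)))
      ((hp.mul hwc).aestronglyMeasurable)
    filter_upwards with t
    simp only [Pi.add_apply]
    have hb1 : ‖p t * w t‖ = |p t| * w t := by
      rw [norm_mul, Real.norm_eq_abs, Real.norm_eq_abs, abs_of_nonneg (hw0 t)]
    rw [Pi.mul_apply, hb1]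
    have hb2 : |p t| * w t ≤ (M * (1 + |t|)^2) * Real.exp (K - ε * t^2) :=
      mul_le_mul (hM t) (hgw t) (hw0 t) (by positivity)
    have hb3 : (M * (1 + |t|)^2) * Real.exp (K - ε * t^2)
        ≤ 2*M * Real.exp (K - ε * t^2) + 2*M * (t^2 * Real.exp (K - ε * t^2)) := by
      have he := Real.exp_pos (K - ε * t^2)
      have : M * (1 + |t|)^2 ≤ 2*M + 2*M*t^2 := by
        nlinarith [sq_nonneg (1 - |t|), sq_abs t, abs_nonneg t]
      nlinarith
    linarith
  -- linear growth bounds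
  have hLip0 : ∀ x y : ℝ, x ≤ y → |deriv U y - deriv U x| ≤ C₂ * (y - x) := by
    intro x y h
    have hs := hsand x y h
    have h0 : (0:ℝ) ≤ deriv U y - deriv U x :=
      le_trans (mul_nonneg hC₁.le (by linarith)) hs.1
    rw [abs_of_nonneg h0]; exact hs.2
  have hLip : ∀ x y : ℝ, |deriv U x - deriv U y| ≤ C₂ * |x - y| := by
    intro x y
    rcases le_total y x with h | h
    · rw [abs_of_nonneg (sub_nonneg.2 h)]; exact hLip0 y x h
    · rw [abs_sub_comm, abs_of_nonpos (sub_nonpos.2 h), ← neg_sub]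
      simpa using hLip0 x y h
  have hptw : ∀ c t : ℝ, |deriv U (c - t)| ≤ |deriv U c| + C₂ * |t| := by
    intro c t
    have h12 := hLip (c - t) c
    have h13 : |c - t - c| = |t| := by rw [show c - t - c = -t by ring, abs_neg]
    rw [h13] at h12
    have h14 := abs_sub_abs_le_abs_sub (deriv U (c - t)) (deriv U c)
    linarith
  have hlinU : ∀ c t : ℝ, |deriv U (c - t)| ≤ (|deriv U c| + C₂) * (1 + |t|) := by
    intro c t
    have h15 := hptw c t
    nlinarith [abs_nonneg t, abs_nonneg (deriv U c), hC₂]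
  have hfL : ∀ t, |f t| ≤ (|deriv U (a i)| + C₂) * (1 + |t|) := fun t => hlinU (a i) t
  have hgL : ∀ t, |g t| ≤ (|deriv U (a j)| + C₂) * (1 + |t|) := fun t => hlinU (a j) t
  have hWL : ∀ t, |Wd t| ≤ (2*β*(∑ k, |deriv U (a k)| + (2*(d:ℝ))*C₂)) * (1 + |t|) := by
    intro t
    have hb : |∑ k, deriv U (a k - t)| ≤ (∑ k, |deriv U (a k)|) + (2*(d:ℝ))*(C₂*|t|) := by
      refine (Finset.abs_sum_le_sum_abs _ _).trans ?_
      have hb1 : ∑ k : Fin (2*d), |deriv U (a k - t)|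
          ≤ ∑ k : Fin (2*d), (|deriv U (a k)| + C₂*|t|) :=
        Finset.sum_le_sum fun k _ => hptw (a k) t
      have hb2 : ∑ k : Fin (2*d), (|deriv U (a k)| + C₂*|t|)
          = (∑ k, |deriv U (a k)|) + (2*(d:ℝ))*(C₂*|t|) := by
        rw [Finset.sum_add_distrib, Finset.sum_const, Finset.card_univ, Fintype.card_fin,
          nsmul_eq_mul]
        push_cast; ring
      linarith
    have habs2 : |Wd t| = (2*β) * |∑ k, deriv U (a k - t)| := by
      rw [hWdef, abs_mul, abs_neg, abs_of_nonneg h2β]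
    rw [habs2]
    have hstep := mul_le_mul_of_nonneg_left hb h2β
    have hsum0 : (0:ℝ) ≤ ∑ k, |deriv U (a k)| := Finset.sum_nonneg fun k _ => abs_nonneg _
    nlinarith [abs_nonneg t, mul_nonneg (mul_nonneg h2β hsum0) (abs_nonneg t),
      mul_nonneg h2β (mul_nonneg (by positivity : (0:ℝ) ≤ 2*(d:ℝ)) hC₂.le)]
  have hidL : ∀ t : ℝ, |(fun t : ℝ => t) t| ≤ 1 * (1 + |t|) := by
    intro t; show |t| ≤ 1 * (1 + |t|); rw [one_mul]; linarith [abs_nonneg t]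
  -- products of linear growth: quadratic bound
  have hprod : ∀ (u v : ℝ → ℝ) (Mu Mv : ℝ), (∀ t, |u t| ≤ Mu * (1 + |t|)) →
      (∀ t, |v t| ≤ Mv * (1 + |t|)) → ∀ t, |u t * v t| ≤ (Mu*Mv) * (1 + |t|)^2 := by
    intro u v Mu Mv hu hv t
    have hMu : 0 ≤ Mu := by have := hu 0; simp at this; linarith [abs_nonneg (u 0)]
    have hMv : 0 ≤ Mv := by have := hv 0; simp at this; linarith [abs_nonneg (v 0)]
    rw [abs_mul]
    have h13 : |u t| * |v t| ≤ (Mu * (1+|t|)) * (Mv * (1+|t|)) :=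
      mul_le_mul (hu t) (hv t) (abs_nonneg _) (by positivity)
    nlinarith [h13]
  have hone : ∀ t : ℝ, |(1:ℝ)| ≤ 1 * (1 + |t|) := by
    intro t; rw [abs_one, one_mul]; linarith [abs_nonneg t]
  set Mf := |deriv U (a i)| + C₂ with hMfdef
  set Mg := |deriv U (a j)| + C₂ with hMgdef
  set MW := 2*β*(∑ k, |deriv U (a k)| + (2*(d:ℝ))*C₂) with hMWdef
  have hWc : Continuous Wd := by
    apply continuous_const.mul
    exact continuous_finset_sum _ fun k _ => hU'cont.comp (continuous_const.sub continuous_id)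
  have hfc : Continuous f := hU'cont.comp (continuous_const.sub continuous_id)
  have hgc : Continuous g := hU'cont.comp (continuous_const.sub continuous_id)
  -- integrability of everything
  have Iw : Integrable w := by
    have := mast (fun _ => (1:ℝ)) continuous_const 1 (by
      intro t; simpa using hprod (fun _ => (1:ℝ)) (fun _ => (1:ℝ)) 1 1 hone hone t)
    simpa using this
  have If : Integrable (fun t => f t * w t) :=
    mast f hfc (Mf * 1) (fun t => by simpa using hprod f (fun _ => (1:ℝ)) Mf 1 hfL hone t)
  have Ig : Integrable (fun t => g t * w t) :=
    mast g hgc (Mg * 1) (fun t => by simpa using hprod g (fun _ => (1:ℝ)) Mg 1 hgL hone t)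
  have Ifg : Integrable (fun t => f t * g t * w t) :=
    mast (fun t => f t * g t) (hfc.mul hgc) (Mf * Mg) (fun t => hprod f g Mf Mg hfL hgL t)
  have Iid : Integrable (fun t => t * w t) :=
    mast (fun t => t) continuous_id (1 * 1)
      (fun t => by simpa using hprod (fun t => t) (fun _ => (1:ℝ)) 1 1 hidL hone t)
  have Iid2 : Integrable (fun t => t * t * w t) :=
    mast (fun t => t * t) (continuous_id.mul continuous_id) (1 * 1)
      (fun t => hprod (fun t => t) (fun t => t) 1 1 hidL hidL t)
  have IW : Integrable (fun t => Wd t * w t) :=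
    mast Wd hWc (MW * 1) (fun t => by simpa using hprod Wd (fun _ => (1:ℝ)) MW 1 hWL hone t)
  have IidW : Integrable (fun t => t * Wd t * w t) :=
    mast (fun t => t * Wd t) (continuous_id.mul hWc) (1 * MW)
      (fun t => hprod (fun t => t) Wd 1 MW hidL hWL t)
  -- derivative of w
  have hwderiv : ∀ t, HasDerivAt w (-(Wd t * w t)) t := by
    intro t
    have hsumd : HasDerivAt (fun t => ∑ k, U (a k - t))
        (∑ k : Fin (2*d), -deriv U (a k - t)) t := by
      apply HasDerivAt.fun_sum
      intro k _
      have hin : HasDerivAt (fun t : ℝ => a k - t) (-1) t := by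
        simpa using (hasDerivAt_id t).const_sub (a k)
      have := (hUdiff (a k - t)).hasDerivAt.comp t hin
      simpa [mul_comm, Function.comp_def] using this
    have hVd : HasDerivAt (fun t => -(2*β) * ∑ k, U (a k - t))
        (-(2*β) * ∑ k : Fin (2*d), -deriv U (a k - t)) t := hsumd.const_mul _
    have := hVd.exp
    have heq : Real.exp (-(2*β) * ∑ k, U (a k - t))
        * (-(2*β) * ∑ k : Fin (2*d), -deriv U (a k - t)) = -(Wd t * w t) := by
      rw [show w t = Real.exp (-(2*β) * ∑ k, U (a k - t)) from rfl, hWdef]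
      simp [Finset.sum_neg_distrib]
      ring
    rw [heq] at this
    exact this
  -- Stein identities
  have hvan_w : Tendsto w atTop (𝓝 0) ∧ Tendsto w atBot (𝓝 0) := by
    apply gauss_vanish hε (c := 1)
    intro t
    rw [abs_of_nonneg (hw0 t), one_mul]
    have := hgw t
    nlinarith [Real.exp_pos (K - ε * t^2), abs_nonneg t]
  have hT0 : ∫ t, Wd t * w t = 0 := by
    have h14 : ∫ t, -(Wd t * w t) = 0 :=
      integral_deriv_zero hwderiv (by exact IW.neg) hvan_w.1 hvan_w.2
    rw [integral_neg] at h14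
    linarith
  have hT1 : ∫ t, t * Wd t * w t = Z := by
    have hG : ∀ t : ℝ, HasDerivAt (fun t => -(t * w t)) (t * Wd t * w t - w t) t := by
      intro t
      have := ((hasDerivAt_id t).mul (hwderiv t)).neg
      have h' : HasDerivAt (fun t => -(t * w t)) (-(1 * w t + t * -(Wd t * w t))) t := this
      convert h' using 1
      ring
    have hGi : Integrable (fun t => t * Wd t * w t - w t) := IidW.sub Iw
    have hvan : Tendsto (fun t => -(t * w t)) atTop (𝓝 0)
        ∧ Tendsto (fun t => -(t * w t)) atBot (𝓝 0) := by
      apply gauss_vanish hε (c := 1)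
      intro t
      rw [abs_neg, abs_mul, abs_of_nonneg (hw0 t), one_mul]
      have h15 := hgw t
      have h16 : |t| * w t ≤ |t| * Real.exp (K - ε * t^2) :=
        mul_le_mul_of_nonneg_left h15 (abs_nonneg t)
      nlinarith [Real.exp_pos (K - ε * t^2)]
    have h17 : ∫ t, (t * Wd t * w t - w t) = 0 :=
      integral_deriv_zero hG hGi hvan.1 hvan.2
    rw [integral_sub IidW Iw] at h17
    have : Z = ∫ t, w t := hZdef
    linarith
  -- positivity of Z
  have hZpos : 0 < Z := by
    rw [hZdef, Zsite]
    rw [integral_pos_iff_support_of_nonneg hw0 Iw]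
    have : Function.support w = Set.univ :=
      Set.eq_univ_of_forall (fun t => (Real.exp_pos _).ne')
    rw [this]
    simp [Real.volume_univ]
  -- integrals under nuSite
  have hnu : ∀ φ : ℝ → ℝ, (∫ t, φ t ∂(nuSite β d U a)) = (∫ t, φ t * w t) / Z := by
    intro φ
    have hm : Measurable (fun t => (w t / Z).toNNReal) :=
      (hwc.div_const Z).measurable.real_toNNReal
    have hdens : nuSite β d U a
        = volume.withDensity fun t => ((w t / Z).toNNReal : ℝ≥0∞) := rfl
    rw [hdens, integral_withDensity_eq_integral_smul hm]
    have : (fun t => (w t / Z).toNNReal • φ t) = fun t => (φ t * w t) * Z⁻¹ := by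
      funext t
      rw [NNReal.smul_def, Real.coe_toNNReal _ (div_nonneg (hw0 t) hZpos.le), smul_eq_mul]
      ring
    rw [this, integral_mul_const]
    rw [div_eq_mul_inv]
  -- pointwise kernel comparisons
  have keyFG : ∀ s t : ℝ, t ≤ s →
      (C₁*s - C₁*t) * (C₁*s - C₁*t) ≤ (f s - f t) * (g s - g t) ∧
      (f s - f t) * (g s - g t) ≤ (C₂*s - C₂*t) * (C₂*s - C₂*t) := by
    intro s t hts
    have hx : a i - s ≤ a i - t := by linarith
    have hy : a j - s ≤ a j - t := by linarith
    have hu := hsand (a i - s) (a i - t) hx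
    have hv := hsand (a j - s) (a j - t) hy
    rw [show a i - t - (a i - s) = s - t by ring] at hu
    rw [show a j - t - (a j - s) = s - t by ring] at hv
    have hfs : f s - f t = -(deriv U (a i - t) - deriv U (a i - s)) := by
      simp only [hfdef]; ring
    have hgs : g s - g t = -(deriv U (a j - t) - deriv U (a j - s)) := by
      simp only [hgdef]; ring
    rw [hfs, hgs, neg_mul_neg]
    have h1' : 0 ≤ C₁ * (s - t) := mul_nonneg hC₁.le (by linarith)
    constructor
    · nlinarith [hu.1, hv.1]
    · nlinarith [hu.1, hu.2, hv.1, hv.2]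
  have hptFG_low : ∀ s t : ℝ,
      (C₁*s - C₁*t) * (C₁*s - C₁*t) ≤ (f s - f t) * (g s - g t) := by
    intro s t
    rcases le_total t s with h | h
    · exact (keyFG s t h).1
    · have := (keyFG t s h).1; nlinarith [this]
  have hptFG_upp : ∀ s t : ℝ,
      (f s - f t) * (g s - g t) ≤ (C₂*s - C₂*t) * (C₂*s - C₂*t) := by
    intro s t
    rcases le_total t s with h | h
    · exact (keyFG s t h).2
    · have := (keyFG t s h).2; nlinarith [this]
  have keyW : ∀ s t : ℝ, t ≤ s →
      (4*(d:ℝ)*β*C₁*(s-t)) * (s-t) ≤ (s - t) * (Wd s - Wd t) ∧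
      (s - t) * (Wd s - Wd t) ≤ (4*(d:ℝ)*β*C₂*(s-t)) * (s-t) := by
    intro s t hts
    have hWdiff : Wd s - Wd t
        = (2*β) * ∑ k, (deriv U (a k - t) - deriv U (a k - s)) := by
      simp only [hWdef]
      rw [Finset.sum_sub_distrib]
      ring
    have hterm : ∀ k : Fin (2*d), C₁*(s-t) ≤ deriv U (a k - t) - deriv U (a k - s)
        ∧ deriv U (a k - t) - deriv U (a k - s) ≤ C₂*(s-t) := by
      intro k
      have := hsand (a k - s) (a k - t) (by linarith)
      rw [show a k - t - (a k - s) = s - t by ring] at this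
      exact this
    have hsumlow : ∑ k : Fin (2*d), (C₁*(s-t))
        ≤ ∑ k, (deriv U (a k - t) - deriv U (a k - s)) :=
      Finset.sum_le_sum fun k _ => (hterm k).1
    have hsumupp : ∑ k, (deriv U (a k - t) - deriv U (a k - s))
        ≤ ∑ k : Fin (2*d), (C₂*(s-t)) :=
      Finset.sum_le_sum fun k _ => (hterm k).2
    have hc1 : ∑ k : Fin (2*d), (C₁*(s-t)) = (2*(d:ℝ))*(C₁*(s-t)) := by
      rw [Finset.sum_const, Finset.card_univ, Fintype.card_fin, nsmul_eq_mul]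
      push_cast; ring
    have hc2 : ∑ k : Fin (2*d), (C₂*(s-t)) = (2*(d:ℝ))*(C₂*(s-t)) := by
      rw [Finset.sum_const, Finset.card_univ, Fintype.card_fin, nsmul_eq_mul]
      push_cast; ring
    rw [hc1] at hsumlow
    rw [hc2] at hsumupp
    have hst : (0:ℝ) ≤ s - t := by linarith
    have hlow : (2*β) * ((2*(d:ℝ))*(C₁*(s-t))) ≤ Wd s - Wd t := by
      rw [hWdiff]; exact mul_le_mul_of_nonneg_left hsumlow h2β
    have hupp : Wd s - Wd t ≤ (2*β) * ((2*(d:ℝ))*(C₂*(s-t))) := by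
      rw [hWdiff]; exact mul_le_mul_of_nonneg_left hsumupp h2β
    constructor
    · nlinarith [mul_le_mul_of_nonneg_left hlow hst]
    · nlinarith [mul_le_mul_of_nonneg_left hupp hst]
  have hptW_low : ∀ s t : ℝ,
      ((4*(d:ℝ)*β*C₁)*s - (4*(d:ℝ)*β*C₁)*t) * (s - t) ≤ (s - t) * (Wd s - Wd t) := by
    intro s t
    rcases le_total t s with h | h
    · have := (keyW s t h).1; nlinarith [this]
    · have := (keyW t s h).1; nlinarith [this]
  have hptW_upp : ∀ s t : ℝ,
      (s - t) * (Wd s - Wd t) ≤ ((4*(d:ℝ)*β*C₂)*s - (4*(d:ℝ)*β*C₂)*t) * (s - t) := by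
    intro s t
    rcases le_total t s with h | h
    · have := (keyW s t h).2; nlinarith [this]
    · have := (keyW t s h).2; nlinarith [this]
  -- scaled integrabilities
  have Iconst : ∀ c : ℝ, Integrable (fun t => (c*t) * w t) := by
    intro c
    have e : (fun t => (c*t) * w t) = fun t => c * (t * w t) := by funext t; ring
    rw [e]; exact Iid.const_mul c
  have Iconst2 : ∀ c : ℝ, Integrable (fun t => (c*t) * (c*t) * w t) := by
    intro c
    have e : (fun t => (c*t) * (c*t) * w t) = fun t => (c*c) * (t * t * w t) := by
      funext t; ring
    rw [e]; exact Iid2.const_mul _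
  have Iconst2' : ∀ c : ℝ, Integrable (fun t => (c*t) * t * w t) := by
    intro c
    have e : (fun t => (c*t) * t * w t) = fun t => c * (t * t * w t) := by
      funext t; ring
    rw [e]; exact Iid2.const_mul _
  -- the four comparisons
  have A1 := covkernel_mono w f g (fun t => C₁*t) (fun t => C₁*t) hw0
    Iw If Ig Ifg (Iconst C₁) (Iconst C₁) (Iconst2 C₁) hptFG_low
  have A2 := covkernel_mono w (fun t => C₂*t) (fun t => C₂*t) f g hw0
    Iw (Iconst C₂) (Iconst C₂) (Iconst2 C₂) If Ig Ifg hptFG_upp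
  have B1 := covkernel_mono w (fun t => t) Wd (fun t => (4*(d:ℝ)*β*C₁)*t) (fun t => t) hw0
    Iw Iid IW IidW (Iconst _) Iid (Iconst2' _) hptW_low
  have B2 := covkernel_mono w (fun t => (4*(d:ℝ)*β*C₂)*t) (fun t => t) (fun t => t) Wd hw0
    Iw (Iconst _) Iid (Iconst2' _) Iid IW IidW hptW_upp
  -- rewrite the scaled integrals
  have e1 : ∀ c : ℝ, ∫ t, (c*t) * (c*t) * w t = (c*c) * ∫ t, t * t * w t := by
    intro c
    rw [show (fun t => (c*t) * (c*t) * w t) = fun t => (c*c) * (t * t * w t) from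
      funext fun t => by ring, integral_const_mul]
  have e2 : ∀ c : ℝ, ∫ t, (c*t) * w t = c * ∫ t, t * w t := by
    intro c
    rw [show (fun t => (c*t) * w t) = fun t => c * (t * w t) from
      funext fun t => by ring, integral_const_mul]
  have e3 : ∀ c : ℝ, ∫ t, (c*t) * t * w t = c * ∫ t, t * t * w t := by
    intro c
    rw [show (fun t => (c*t) * t * w t) = fun t => c * (t * t * w t) from
      funext fun t => by ring, integral_const_mul]
  rw [e1, e2] at A1 A2
  rw [e2, e3] at B1 B2
  rw [hT0, hT1] at B1 B2
  have hZint : (∫ t, w t) = Z := rfl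
  rw [hZint] at A1 A2 B1 B2
  set P := ∫ t, f t * g t * w t with hP
  set F := ∫ t, f t * w t with hF
  set Gg := ∫ t, g t * w t with hG
  set S1 := ∫ t, t * w t with hS1
  set S2 := ∫ t, t * t * w t with hS2
  -- covariance in weighted form
  have hcov : covM (nuSite β d U a) f g = (Z*P - F*Gg)/Z^2 := by
    rw [covM, hnu (fun t => f t * g t), hnu f, hnu g]
    rw [← hP, ← hF, ← hG]
    field_simp
  -- positivity
  have hdpos : (0:ℝ) < (d:ℝ) := by linarith
  have hc₁pos : (0:ℝ) < 4*(d:ℝ)*β*C₁ := by positivity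
  have hc₂pos : (0:ℝ) < 4*(d:ℝ)*β*C₂ := by positivity
  have hB2' : Z*Z ≤ (4*(d:ℝ)*β*C₂) * (Z*S2 - S1*S1) := by linarith [B2]
  have hB1' : (4*(d:ℝ)*β*C₁) * (Z*S2 - S1*S1) ≤ Z*Z := by linarith [B1]
  have hA1' : C₁^2 * (Z*S2 - S1*S1) ≤ Z*P - F*Gg := by linarith [A1]
  have hA2' : Z*P - F*Gg ≤ C₂^2 * (Z*S2 - S1*S1) := by linarith [A2]
  have hQpos : 0 < Z*S2 - S1*S1 := by nlinarith [hB2', mul_pos hZpos hZpos]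
  have hZ2 : (0:ℝ) < Z^2 := by positivity
  constructor
  · rw [hcov, le_div_iff₀ hZ2]
    have t1 : C₁^2 * (Z*Z) ≤ C₁^2 * ((4*(d:ℝ)*β*C₂) * (Z*S2 - S1*S1)) :=
      mul_le_mul_of_nonneg_left hB2' (by positivity)
    rw [div_mul_eq_mul_div, div_le_iff₀ hc₂pos]
    linarith [mul_le_mul_of_nonneg_right hA1' hc₂pos.le]
  · rw [hcov, div_le_iff₀ hZ2]
    have t1 : C₂^2 * ((4*(d:ℝ)*β*C₁) * (Z*S2 - S1*S1)) ≤ C₂^2 * (Z*Z) :=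
      mul_le_mul_of_nonneg_left hB1' (by positivity)
    rw [div_mul_eq_mul_div, le_div_iff₀ hc₁pos]
    linarith [mul_le_mul_of_nonneg_right hA2' hc₁pos.le]

end
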